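/- Let n ≥ 1 and let A ⊆ C_n be a nonempty subset. Set ρ = 1/2 − Δ(A)/n, so that 0 ≤ ρ ≤ 1/2. Then 1 − H(1/2 − ρ) ≤ (log₂|A|)/n ≤ H(ρ). -/

import Mathlib

/-- The Hamming distance from a point `a` of the Boolean cube to a subset `A`. -/
noncomputable def distToSet {ι : Type*} [Fintype ι] (a : ι → Bool) (A : Set (ι → Bool)) : ℕ :=
  sInf ((fun b => hammingDist a b) '' A)

/-- The average Hamming distance from a point of the Boolean cube to a subset `A`. -/
noncomputable def avgDist {ι : Type*} [Fintype ι] [DecidableEq ι] (A : Set (ι → Bool)) : ℝ :=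
  (2 ^ Fintype.card ι : ℝ)⁻¹ * ∑ x : ι → Bool, (distToSet x A : ℝ)

/-- The binary entropy function `H(x) = x log₂(1/x) + (1-x) log₂(1/(1-x))`
(with the convention `H(0) = 0`, which holds automatically since `Real.log 0 = 0`). -/
noncomputable def binEnt (x : ℝ) : ℝ :=
  x * Real.logb 2 (1 / x) + (1 - x) * Real.logb 2 (1 / (1 - x))

theorem binEnt_eq (x : ℝ) : binEnt x = Real.binEntropy x / Real.log 2 := by
  unfold binEnt Real.binEntropy Real.logb
  rw [one_div, one_div]
  ring

theorem binEnt_nonneg {x : ℝ} (h0 : 0 ≤ x) (h1 : x ≤ 1) : 0 ≤ binEnt x := by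
  rw [binEnt_eq]
  exact div_nonneg (Real.binEntropy_nonneg h0 h1) (Real.log_nonneg one_le_two)

theorem binEnt_half : binEnt (1/2) = 1 := by
  rw [binEnt_eq, show (1:ℝ)/2 = 2⁻¹ by norm_num, Real.binEntropy_two_inv]
  rw [div_self (by positivity : Real.log 2 ≠ 0)]

theorem binEnt_zero : binEnt 0 = 0 := by
  rw [binEnt_eq, Real.binEntropy_zero, zero_div]

theorem binEnt_one_sub (x : ℝ) : binEnt (1 - x) = binEnt x := by
  rw [binEnt_eq, binEnt_eq, Real.binEntropy_one_sub]

theorem binEnt_mono {a b : ℝ} (ha : 0 ≤ a) (hab : a ≤ b) (hb : b ≤ 1/2) : binEnt a ≤ binEnt b := by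
  rw [binEnt_eq, binEnt_eq]
  apply div_le_div_of_nonneg_right _ (by positivity)
  rcases eq_or_lt_of_le hab with h | h
  · rw [h]
  · have hb' : b ≤ (2:ℝ)⁻¹ := by rw [← one_div]; exact hb
    exact le_of_lt (Real.binEntropy_strictMonoOn
      ⟨ha, by linarith⟩ ⟨by linarith, hb'⟩ h)

theorem binEnt_concave {p q a b : ℝ} (hp0 : 0 ≤ p) (hp1 : p ≤ 1) (hq0 : 0 ≤ q) (hq1 : q ≤ 1)
    (ha : 0 ≤ a) (hb : 0 ≤ b) (hab : a + b = 1) :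
    a * binEnt p + b * binEnt q ≤ binEnt (a * p + b * q) := by
  rw [binEnt_eq, binEnt_eq, binEnt_eq]
  have key := Real.strictConcave_binEntropy.concaveOn.2 (x := p) (y := q)
    ⟨hp0, hp1⟩ ⟨hq0, hq1⟩ ha hb hab
  simp only [smul_eq_mul] at key
  have hl : (0:ℝ) < Real.log 2 := by positivity
  rw [div_eq_mul_inv, div_eq_mul_inv, div_eq_mul_inv]
  calc a * (Real.binEntropy p * (Real.log 2)⁻¹) + b * (Real.binEntropy q * (Real.log 2)⁻¹)
      = (a * Real.binEntropy p + b * Real.binEntropy q) * (Real.log 2)⁻¹ := by ring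
    _ ≤ Real.binEntropy (a * p + b * q) * (Real.log 2)⁻¹ := by
        apply mul_le_mul_of_nonneg_right key (by positivity)

/-- Symmetry + monotonicity: if `w` is closer to `1/2` than `α`, its entropy is at least as big. -/
theorem binEnt_ge_of_closer {w α : ℝ} (hw0 : 0 ≤ w) (hw1 : w ≤ 1) (hα0 : 0 ≤ α) (hα1 : α ≤ 1)
    (h : |w - 1/2| ≤ |α - 1/2|) : binEnt α ≤ binEnt w := by
  have hsym : ∀ x : ℝ, 0 ≤ x → x ≤ 1 → binEnt x = binEnt (1/2 - |x - 1/2|) := by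
    intro x hx0 hx1
    rcases le_or_gt x (1/2) with h' | h'
    · rw [abs_of_nonpos (by linarith)]; ring_nf
    · rw [abs_of_pos (by linarith)]
      rw [show (1:ℝ)/2 - (x - 1/2) = 1 - x by ring, binEnt_one_sub]
  rw [hsym w hw0 hw1, hsym α hα0 hα1]
  apply binEnt_mono
  · have := abs_nonneg (α - 1/2)
    have : |α - 1/2| ≤ 1/2 := by
      rw [abs_le]; constructor <;> linarith
    linarith
  · linarith
  · have := abs_nonneg (w - 1/2); linarith

theorem distToSet_le {n : ℕ} {A : Set (Fin n → Bool)} {b : Fin n → Bool} (hb : b ∈ A)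
    (x : Fin n → Bool) : distToSet x A ≤ hammingDist x b :=
  Nat.sInf_le ⟨b, hb, rfl⟩

theorem exists_distToSet {n : ℕ} {A : Set (Fin n → Bool)} (hA : A.Nonempty) (x : Fin n → Bool) :
    ∃ b ∈ A, distToSet x A = hammingDist x b := by
  obtain ⟨b, hb, he⟩ := Nat.sInf_mem (hA.image fun b => hammingDist x b)
  exact ⟨b, hb, he.symm⟩

theorem distToSet_eq_zero {n : ℕ} {A : Set (Fin n → Bool)} (hA : A.Nonempty) {x : Fin n → Bool}
    (h : distToSet x A = 0) : x ∈ A := by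
  obtain ⟨b, hb, he⟩ := exists_distToSet hA x
  rw [h] at he
  rwa [eq_of_hammingDist_eq_zero he.symm]

theorem distToSet_self {n : ℕ} {A : Set (Fin n → Bool)} {x : Fin n → Bool} (hx : x ∈ A) :
    distToSet x A = 0 :=
  Nat.le_zero.mp (by simpa using distToSet_le hx x)


theorem hammingDist_eq_sum {k : ℕ} (y z : Fin k → Bool) :
    hammingDist y z = ∑ i, if y i ≠ z i then 1 else 0 := by
  rw [hammingDist, Finset.card_filter]

theorem hammingDist_cons {k : ℕ} (b c : Bool) (y z : Fin k → Bool) :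
    hammingDist (Fin.cons b y : Fin (k+1) → Bool) (Fin.cons c z) =
      (if b = c then 0 else 1) + hammingDist y z := by
  have h1 := hammingDist_eq_sum (Fin.cons b y : Fin (k+1) → Bool) (Fin.cons c z)
  rw [h1, hammingDist_eq_sum y z, Fin.sum_univ_succ]
  simp only [Fin.cons_zero, Fin.cons_succ]
  congr 1
  rcases eq_or_ne b c with h | h <;> simp [h]

def fiber {k : ℕ} (A : Set (Fin (k+1) → Bool)) (b : Bool) : Set (Fin k → Bool) :=
  {y | (Fin.cons b y : Fin (k+1) → Bool) ∈ A}

theorem mem_fiber {k : ℕ} {A : Set (Fin (k+1) → Bool)} {b : Bool} {y : Fin k → Bool} :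
    y ∈ fiber A b ↔ (Fin.cons b y : Fin (k+1) → Bool) ∈ A := Iff.rfl

theorem bool_ne_iff {b c : Bool} (h : ¬ b = c) : c = !b := by
  cases b <;> cases c <;> simp_all

theorem distToSet_cons_both {k : ℕ} {A : Set (Fin (k+1) → Bool)} {b : Bool}
    (hP : (fiber A b).Nonempty) (hQ : (fiber A (!b)).Nonempty) (y : Fin k → Bool) :
    distToSet (Fin.cons b y : Fin (k+1) → Bool) A =
      min (distToSet y (fiber A b)) (1 + distToSet y (fiber A (!b))) := by
  apply le_antisymm
  · apply le_min
    · obtain ⟨z, hz, he⟩ := exists_distToSet hP y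
      calc distToSet (Fin.cons b y : Fin (k+1) → Bool) A
          ≤ hammingDist (Fin.cons b y : Fin (k+1) → Bool) (Fin.cons b z) :=
            distToSet_le (show (Fin.cons b z : Fin (k+1) → Bool) ∈ A from hz) _
        _ = distToSet y (fiber A b) := by rw [hammingDist_cons, he]; simp
    · obtain ⟨z, hz, he⟩ := exists_distToSet hQ y
      calc distToSet (Fin.cons b y : Fin (k+1) → Bool) A
          ≤ hammingDist (Fin.cons b y : Fin (k+1) → Bool) (Fin.cons (!b) z) :=
            distToSet_le (show (Fin.cons (!b) z : Fin (k+1) → Bool) ∈ A from hz) _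
        _ = 1 + distToSet y (fiber A (!b)) := by
            rw [hammingDist_cons, he]; simp
  · have hA : A.Nonempty := ⟨_, hP.choose_spec⟩
    obtain ⟨a, ha, he⟩ := exists_distToSet hA (Fin.cons b y : Fin (k+1) → Bool)
    have hat : (Fin.cons (a 0) (Fin.tail a) : Fin (k+1) → Bool) = a := Fin.cons_self_tail a
    have hmem : Fin.tail a ∈ fiber A (a 0) := by rw [mem_fiber, hat]; exact ha
    rw [he, ← hat, hammingDist_cons]
    rcases eq_or_ne b (a 0) with h | h
    · rw [if_pos h]
      refine le_trans (min_le_left _ _) ?_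
      simpa using distToSet_le (h ▸ hmem) y
    · rw [if_neg h]
      refine le_trans (min_le_right _ _) ?_
      have : a 0 = !b := bool_ne_iff h
      simpa using distToSet_le (this ▸ hmem) y

theorem distToSet_cons_empty {k : ℕ} {A : Set (Fin (k+1) → Bool)} {b : Bool}
    (hP : (fiber A b).Nonempty) (hQ : fiber A (!b) = ∅) (y : Fin k → Bool) :
    distToSet (Fin.cons b y : Fin (k+1) → Bool) A = distToSet y (fiber A b) ∧
    distToSet (Fin.cons (!b) y : Fin (k+1) → Bool) A = 1 + distToSet y (fiber A b) := by
  have head_eq : ∀ a ∈ A, a 0 = b := by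
    intro a ha
    by_contra h
    have : Fin.tail a ∈ fiber A (a 0) := by
      rw [mem_fiber, Fin.cons_self_tail]; exact ha
    rw [bool_ne_iff (fun hh => h hh.symm)] at this
    rw [Set.eq_empty_iff_forall_notMem] at hQ
    exact hQ _ this
  constructor
  · apply le_antisymm
    · obtain ⟨z, hz, he⟩ := exists_distToSet hP y
      calc distToSet (Fin.cons b y : Fin (k+1) → Bool) A
          ≤ hammingDist (Fin.cons b y : Fin (k+1) → Bool) (Fin.cons b z) :=
            distToSet_le (show (Fin.cons b z : Fin (k+1) → Bool) ∈ A from hz) _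
        _ = distToSet y (fiber A b) := by rw [hammingDist_cons, he]; simp
    · have hA : A.Nonempty := ⟨_, hP.choose_spec⟩
      obtain ⟨a, ha, he⟩ := exists_distToSet hA (Fin.cons b y : Fin (k+1) → Bool)
      have hat : (Fin.cons (a 0) (Fin.tail a) : Fin (k+1) → Bool) = a := Fin.cons_self_tail a
      have hmem : Fin.tail a ∈ fiber A (a 0) := by rw [mem_fiber, hat]; exact ha
      rw [he, ← hat, hammingDist_cons, head_eq a ha, if_pos rfl]
      simpa using distToSet_le (head_eq a ha ▸ hmem) y
  · apply le_antisymm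
    · obtain ⟨z, hz, he⟩ := exists_distToSet hP y
      calc distToSet (Fin.cons (!b) y : Fin (k+1) → Bool) A
          ≤ hammingDist (Fin.cons (!b) y : Fin (k+1) → Bool) (Fin.cons b z) :=
            distToSet_le (show (Fin.cons b z : Fin (k+1) → Bool) ∈ A from hz) _
        _ = 1 + distToSet y (fiber A b) := by
            rw [hammingDist_cons, he]; simp
    · have hA : A.Nonempty := ⟨_, hP.choose_spec⟩
      obtain ⟨a, ha, he⟩ := exists_distToSet hA (Fin.cons (!b) y : Fin (k+1) → Bool)
      have hat : (Fin.cons (a 0) (Fin.tail a) : Fin (k+1) → Bool) = a := Fin.cons_self_tail a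
      have hmem : Fin.tail a ∈ fiber A (a 0) := by rw [mem_fiber, hat]; exact ha
      rw [he, ← hat, hammingDist_cons, head_eq a ha]
      have : ¬ ((!b) = b) := by cases b <;> simp
      rw [if_neg this]
      have := distToSet_le (head_eq a ha ▸ hmem) y
      omega

def consEquiv (k : ℕ) : Bool × (Fin k → Bool) ≃ (Fin (k+1) → Bool) where
  toFun p := Fin.cons p.1 p.2
  invFun x := (x 0, Fin.tail x)
  left_inv p := by simp [Fin.tail_cons]
  right_inv x := Fin.cons_self_tail x

theorem sum_split {k : ℕ} {M : Type*} [AddCommMonoid M] (f : (Fin (k+1) → Bool) → M) :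
    ∑ x : Fin (k+1) → Bool, f x =
      (∑ y : Fin k → Bool, f (Fin.cons false y)) + ∑ y : Fin k → Bool, f (Fin.cons true y) := by
  rw [← Fintype.sum_equiv (consEquiv k) (fun p => f (Fin.cons p.1 p.2)) f (fun p => rfl)]
  rw [Fintype.sum_prod_type, Fintype.sum_bool]
  exact add_comm _ _

def negEquiv (n : ℕ) : (Fin n → Bool) ≃ (Fin n → Bool) where
  toFun x := fun i => !(x i)
  invFun x := fun i => !(x i)
  left_inv x := by funext i; simp
  right_inv x := by funext i; simp

theorem hammingDist_add_neg {n : ℕ} (x b : Fin n → Bool) :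
    hammingDist x b + hammingDist (fun i => !(x i)) b = n := by
  unfold hammingDist
  have h2 : (Finset.univ.filter fun i => (fun i => !(x i)) i ≠ b i) =
      (Finset.univ.filter fun i => ¬ (x i ≠ b i)) := by
    apply Finset.filter_congr
    intro i _
    cases hx : x i <;> cases hb : b i <;> simp [hx]
  rw [h2, Finset.card_filter_add_card_filter_not]
  simp

theorem sum_hammingDist_const {n : ℕ} (b : Fin n → Bool) :
    2 * ∑ x : Fin n → Bool, hammingDist x b = n * 2^n := by
  have e := negEquiv n
  have h : ∑ x : Fin n → Bool, hammingDist x b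
      = ∑ x : Fin n → Bool, hammingDist (fun i => !(x i)) b :=
    (Equiv.sum_comp (negEquiv n) (fun y => hammingDist y b)).symm
  have : 2 * ∑ x : Fin n → Bool, hammingDist x b
      = ∑ x : Fin n → Bool, (hammingDist x b + hammingDist (fun i => !(x i)) b) := by
    rw [Finset.sum_add_distrib, ← h]; ring
  rw [this]
  simp only [hammingDist_add_neg]
  rw [Finset.sum_const, Finset.card_univ]
  simp [mul_comm]

theorem two_mul_sum_distToSet_le {n : ℕ} {A : Set (Fin n → Bool)} (hA : A.Nonempty) :
    2 * ∑ x : Fin n → Bool, distToSet x A ≤ n * 2^n := by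
  obtain ⟨b, hb⟩ := hA
  calc 2 * ∑ x : Fin n → Bool, distToSet x A
      ≤ 2 * ∑ x : Fin n → Bool, hammingDist x b := by
        apply Nat.mul_le_mul_left
        exact Finset.sum_le_sum fun x _ => distToSet_le hb x
    _ = n * 2^n := sum_hammingDist_const b

theorem card_split {k : ℕ} (A : Set (Fin (k+1) → Bool)) :
    Nat.card A = Nat.card (fiber A false) + Nat.card (fiber A true) := by
  rw [Nat.card_coe_set_eq, Nat.card_coe_set_eq, Nat.card_coe_set_eq]
  have hA : A = (Fin.cons false '' (fiber A false) : Set (Fin (k+1) → Bool)) ∪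
      (Fin.cons true '' (fiber A true)) := by
    ext x
    constructor
    · intro hx
      have hat : (Fin.cons (x 0) (Fin.tail x) : Fin (k+1) → Bool) = x := Fin.cons_self_tail x
      have hmem : Fin.tail x ∈ fiber A (x 0) := by rw [mem_fiber, hat]; exact hx
      cases h0 : x 0
      · left; exact ⟨Fin.tail x, h0 ▸ hmem, h0 ▸ hat⟩
      · right; exact ⟨Fin.tail x, h0 ▸ hmem, h0 ▸ hat⟩
    · rintro (⟨y, hy, rfl⟩ | ⟨y, hy, rfl⟩) <;> exact hy
  have hinj : ∀ b : Bool, Function.Injective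
      (fun y : Fin k → Bool => (Fin.cons b y : Fin (k+1) → Bool)) := by
    intro b y z h
    have := congrArg Fin.tail h
    simpa [Fin.tail_cons] using this
  calc A.ncard = ((Fin.cons false '' (fiber A false) : Set (Fin (k+1) → Bool)) ∪
      (Fin.cons true '' (fiber A true))).ncard := by rw [← hA]
    _ = (fiber A false).ncard + (fiber A true).ncard := by
        rw [Set.ncard_union_eq ?_ (Set.toFinite _) (Set.toFinite _)]
        · rw [Set.ncard_image_of_injective _ (hinj false),
            Set.ncard_image_of_injective _ (hinj true)]
        · rw [Set.disjoint_left]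
          rintro x ⟨y, _, rfl⟩ ⟨z, _, hz⟩
          have := congrFun hz 0
          simp at this

theorem min_sum_identity (a b : ℕ) :
    min a (1 + b) + min b (1 + a) =
      2 * min a b + ((if b < a then 1 else 0) + (if a < b then 1 else 0)) := by
  split_ifs <;> omega

theorem sum_d_split_both {k : ℕ} {A : Set (Fin (k+1) → Bool)}
    (h0 : (fiber A false).Nonempty) (h1 : (fiber A true).Nonempty) :
    ∑ x : Fin (k+1) → Bool, distToSet x A =
      2 * (∑ y : Fin k → Bool, min (distToSet y (fiber A false)) (distToSet y (fiber A true)))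
      + ((∑ y : Fin k → Bool, if distToSet y (fiber A true) < distToSet y (fiber A false) then 1 else 0)
      + (∑ y : Fin k → Bool, if distToSet y (fiber A false) < distToSet y (fiber A true) then 1 else 0)) := by
  rw [sum_split (fun x => distToSet x A)]
  have e0 : ∀ y, distToSet (Fin.cons false y : Fin (k+1) → Bool) A =
      min (distToSet y (fiber A false)) (1 + distToSet y (fiber A true)) := by
    intro y
    exact distToSet_cons_both h0 (by simpa using h1) y
  have e1 : ∀ y, distToSet (Fin.cons true y : Fin (k+1) → Bool) A =
      min (distToSet y (fiber A true)) (1 + distToSet y (fiber A false)) := by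
    intro y
    exact distToSet_cons_both h1 (by simpa using h0) y
  simp only [e0, e1]
  rw [← Finset.sum_add_distrib, Finset.mul_sum, ← Finset.sum_add_distrib, ← Finset.sum_add_distrib]
  apply Finset.sum_congr rfl
  intro y _
  exact min_sum_identity _ _

theorem sum_d_split_empty_true {k : ℕ} {A : Set (Fin (k+1) → Bool)}
    (h0 : (fiber A false).Nonempty) (h1 : fiber A true = ∅) :
    ∑ x : Fin (k+1) → Bool, distToSet x A =
      2 * (∑ y : Fin k → Bool, distToSet y (fiber A false)) + 2^k := by
  rw [sum_split (fun x => distToSet x A)]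
  have h := fun y => distToSet_cons_empty (b := false) h0 (by simpa using h1) y
  have e1 : ∀ y : Fin k → Bool, distToSet (Fin.cons true y : Fin (k+1) → Bool) A
      = 1 + distToSet y (fiber A false) := fun y => by simpa using (h y).2
  simp only [(fun y => (h y).1), e1]
  rw [Finset.sum_add_distrib, Finset.sum_const, Finset.card_univ]
  have : Fintype.card (Fin k → Bool) = 2^k := by
    rw [Fintype.card_fun]; simp
  rw [this]
  simp [Bool.not_false]
  ring

theorem sum_d_split_empty_false {k : ℕ} {A : Set (Fin (k+1) → Bool)}
    (h1 : (fiber A true).Nonempty) (h0 : fiber A false = ∅) :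
    ∑ x : Fin (k+1) → Bool, distToSet x A =
      2 * (∑ y : Fin k → Bool, distToSet y (fiber A true)) + 2^k := by
  rw [sum_split (fun x => distToSet x A)]
  have h := fun y => distToSet_cons_empty (b := true) h1 (by simpa using h0) y
  have e1 : ∀ y : Fin k → Bool, distToSet (Fin.cons false y : Fin (k+1) → Bool) A
      = 1 + distToSet y (fiber A true) := fun y => by simpa using (h y).2
  simp only [(fun y => (h y).1), e1]
  rw [Finset.sum_add_distrib, Finset.sum_const, Finset.card_univ]
  have : Fintype.card (Fin k → Bool) = 2^k := by
    rw [Fintype.card_fun]; simp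
  rw [this]
  simp [Bool.not_true]
  ring

noncomputable def Sd (n : ℕ) (A : Set (Fin n → Bool)) : ℕ := ∑ x : Fin n → Bool, distToSet x A

noncomputable def Rv (n : ℕ) (A : Set (Fin n → Bool)) : ℝ :=
  1/2 - (Sd n A : ℝ) / (n * 2^n)

theorem Rv_le_half (n : ℕ) (A : Set (Fin n → Bool)) : Rv n A ≤ 1/2 := by
  unfold Rv
  have : (0:ℝ) ≤ (Sd n A : ℝ) / (n * 2^n) := by positivity
  linarith

theorem Rv_nonneg {n : ℕ} {A : Set (Fin n → Bool)} (hA : A.Nonempty) : 0 ≤ Rv n A := by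
  rcases Nat.eq_zero_or_pos n with h | h
  · subst h
    unfold Rv
    norm_num
  · have key := two_mul_sum_distToSet_le hA
    unfold Rv
    rw [sub_nonneg, div_le_iff₀ (by positivity)]
    have h2 : ((2 * Sd n A : ℕ) : ℝ) ≤ ((n * 2^n : ℕ) : ℝ) := by
      exact_mod_cast key
    push_cast at h2
    linarith

theorem binEnt_Rv_nonneg {n : ℕ} {A : Set (Fin n → Bool)} (hA : A.Nonempty) :
    0 ≤ binEnt (Rv n A) :=
  binEnt_nonneg (Rv_nonneg hA) (le_trans (Rv_le_half n A) (by norm_num))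

theorem card_one_of_dim0 {A : Set (Fin 0 → Bool)} (hA : A.Nonempty) : Nat.card A = 1 := by
  obtain ⟨a, ha⟩ := hA
  have hall : A = Set.univ := by
    apply Set.eq_univ_of_forall
    intro x
    have : x = a := funext fun i => i.elim0
    rwa [this]
  rw [hall, Nat.card_coe_set_eq, Set.ncard_univ, Nat.card_eq_fintype_card]
  rw [Fintype.card_fun]
  simp

theorem upper_triv {n : ℕ} {A : Set (Fin n → Bool)} (hA : A.Nonempty) (h : Nat.card A = 1) :
    Real.logb 2 (Nat.card A) ≤ (n : ℝ) * binEnt (Rv n A) := by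
  rw [h]
  simp only [Nat.cast_one, Real.logb_one]
  exact mul_nonneg (Nat.cast_nonneg n) (binEnt_Rv_nonneg hA)

theorem gibbs {M0 M1 : ℕ} (h0 : 0 < M0) (h1 : 0 < M1) :
    Real.logb 2 ((M0 : ℝ) + M1) =
      ((M0:ℝ)/(M0+M1)) * Real.logb 2 M0 + ((M1:ℝ)/(M0+M1)) * Real.logb 2 M1
        + binEnt ((M0:ℝ)/(M0+M1)) := by
  have ha : (0:ℝ) < M0 := by exact_mod_cast h0
  have hb : (0:ℝ) < M1 := by exact_mod_cast h1
  have hs : (0:ℝ) < (M0:ℝ) + M1 := by linarith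
  unfold binEnt
  have e2 : (1:ℝ) - (M0:ℝ)/((M0:ℝ)+M1) = (M1:ℝ)/((M0:ℝ)+M1) := by field_simp; ring
  have e1 : (1:ℝ) / ((M0:ℝ)/((M0:ℝ)+M1)) = ((M0:ℝ)+M1)/M0 := by
    rw [one_div_div]
  have e3 : (1:ℝ) / ((M1:ℝ)/((M0:ℝ)+M1)) = ((M0:ℝ)+M1)/M1 := by
    rw [one_div_div]
  rw [e2, e1, e3]
  rw [Real.logb_div (ne_of_gt hs) (ne_of_gt ha), Real.logb_div (ne_of_gt hs) (ne_of_gt hb)]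
  field_simp
  ring

theorem d_ge_min_add (a b : ℕ) : min a b + (if b < a then 1 else 0) ≤ a := by
  split_ifs <;> omega

theorem upper_one_empty {k : ℕ} {A : Set (Fin (k+1) → Bool)} {F : Set (Fin k → Bool)}
    (hF : F.Nonempty) (hA : A.Nonempty)
    (hcard : Nat.card A = Nat.card F)
    (hSd : Sd (k+1) A = 2 * Sd k F + 2^k)
    (hIH : Real.logb 2 (Nat.card F) ≤ (k:ℝ) * binEnt (Rv k F)) :
    Real.logb 2 (Nat.card A) ≤ ((k+1 : ℕ) : ℝ) * binEnt (Rv (k+1) A) := by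
  rcases Nat.eq_zero_or_pos k with hk | hk
  · subst hk
    exact upper_triv hA (hcard.trans (card_one_of_dim0 hF))
  · have hk0 : (0:ℝ) < (k:ℝ) := by exact_mod_cast hk
    have hn0 : (0:ℝ) < (k:ℝ) + 1 := by linarith
    have hSdR : (Sd (k+1) A : ℝ) = 2 * (Sd k F : ℝ) + 2^k := by exact_mod_cast hSd
    have hkey : Rv (k+1) A = ((k:ℝ)/((k:ℝ)+1)) * Rv k F + 0 := by
      unfold Rv
      rw [hSdR]
      push_cast
      field_simp
      ring
    have hr0 : 0 ≤ Rv k F := Rv_nonneg hF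
    have hr1 : Rv k F ≤ 1 := le_trans (Rv_le_half k F) (by norm_num)
    have hconc := binEnt_concave hr0 hr1 (le_refl (0:ℝ)) (by norm_num : (0:ℝ) ≤ 1)
      (by positivity : (0:ℝ) ≤ (k:ℝ)/((k:ℝ)+1)) (by positivity : (0:ℝ) ≤ 1/((k:ℝ)+1))
      (by field_simp)
    rw [binEnt_zero, mul_zero, add_zero] at hconc
    calc Real.logb 2 (Nat.card A) = Real.logb 2 (Nat.card F) := by rw [hcard]
      _ ≤ (k:ℝ) * binEnt (Rv k F) := hIH
      _ = ((k:ℝ)+1) * (((k:ℝ)/((k:ℝ)+1)) * binEnt (Rv k F)) := by field_simp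
      _ ≤ ((k:ℝ)+1) * binEnt (((k:ℝ)/((k:ℝ)+1)) * Rv k F + 0) := by
          apply mul_le_mul_of_nonneg_left _ (le_of_lt hn0)
          exact hconc
      _ = ((k+1 : ℕ) : ℝ) * binEnt (Rv (k+1) A) := by rw [← hkey]; push_cast; ring

theorem d_ge_min_add' (a b : ℕ) : min a b + (if a < b then 1 else 0) ≤ b := by
  split_ifs <;> omega

set_option maxHeartbeats 2000000 in
theorem upper_both {k : ℕ} (hk : 0 < k) {A : Set (Fin (k+1) → Bool)}
    (hF0 : (fiber A false).Nonempty) (hF1 : (fiber A true).Nonempty)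
    (hIH0 : Real.logb 2 (Nat.card (fiber A false)) ≤ (k:ℝ) * binEnt (Rv k (fiber A false)))
    (hIH1 : Real.logb 2 (Nat.card (fiber A true)) ≤ (k:ℝ) * binEnt (Rv k (fiber A true))) :
    Real.logb 2 (Nat.card A) ≤ ((k+1 : ℕ) : ℝ) * binEnt (Rv (k+1) A) := by
  -- sizes
  have hM0 : 0 < Nat.card (fiber A false) := by
    haveI := hF0.to_subtype
    exact Nat.card_pos
  have hM1 : 0 < Nat.card (fiber A true) := by
    haveI := hF1.to_subtype
    exact Nat.card_pos
  set M0 := Nat.card (fiber A false) with hM0def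
  set M1 := Nat.card (fiber A true) with hM1def
  have hM0R : (0:ℝ) < (M0:ℝ) := by exact_mod_cast hM0
  have hM1R : (0:ℝ) < (M1:ℝ) := by exact_mod_cast hM1
  have hMR : (0:ℝ) < (M0:ℝ) + M1 := by linarith
  -- nat sums
  set SW := ∑ y : Fin k → Bool,
      min (distToSet y (fiber A false)) (distToSet y (fiber A true)) with hSWdef
  set Q0 := ∑ y : Fin k → Bool,
      (if distToSet y (fiber A true) < distToSet y (fiber A false) then 1 else 0) with hQ0def
  set Q1 := ∑ y : Fin k → Bool,
      (if distToSet y (fiber A false) < distToSet y (fiber A true) then 1 else 0) with hQ1def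
  have hSd_nat : Sd (k+1) A = 2 * SW + (Q0 + Q1) := sum_d_split_both hF0 hF1
  have hS0_nat : SW + Q0 ≤ Sd k (fiber A false) := by
    rw [hSWdef, hQ0def, ← Finset.sum_add_distrib]
    exact Finset.sum_le_sum fun y _ => d_ge_min_add _ _
  have hS1_nat : SW + Q1 ≤ Sd k (fiber A true) := by
    rw [hSWdef, hQ1def, ← Finset.sum_add_distrib]
    exact Finset.sum_le_sum fun y _ => d_ge_min_add' _ _
  have hQsum_nat : Q0 + Q1 ≤ 2^k := by
    rw [hQ0def, hQ1def, ← Finset.sum_add_distrib]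
    calc ∑ y : Fin k → Bool,
        ((if distToSet y (fiber A true) < distToSet y (fiber A false) then 1 else 0)
          + (if distToSet y (fiber A false) < distToSet y (fiber A true) then 1 else 0))
        ≤ ∑ _y : Fin k → Bool, 1 := Finset.sum_le_sum fun y _ => by split_ifs <;> omega
      _ = 2^k := by
          rw [Finset.sum_const, Finset.card_univ, Fintype.card_fun]
          simp
  -- real quantities
  have hk0 : (0:ℝ) < (k:ℝ) := by exact_mod_cast hk
  have h2k : (0:ℝ) < (2:ℝ)^k := by positivity
  have hn0 : (0:ℝ) < (k:ℝ) + 1 := by linarith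
  set α := (M0:ℝ)/((M0:ℝ)+M1) with hαdef
  have hα0 : 0 ≤ α := by positivity
  have hα1 : α ≤ 1 := by
    rw [hαdef, div_le_one hMR]; linarith
  have hone_sub : 1 - α = (M1:ℝ)/((M0:ℝ)+M1) := by
    rw [hαdef]; field_simp; ring
  have h1α0 : 0 ≤ 1 - α := by linarith
  set r0 := Rv k (fiber A false) with hr0def
  set r1 := Rv k (fiber A true) with hr1def
  have hr00 : 0 ≤ r0 := Rv_nonneg hF0
  have hr10 : 0 ≤ r1 := Rv_nonneg hF1
  have hr0h : r0 ≤ 1/2 := Rv_le_half _ _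
  have hr1h : r1 ≤ 1/2 := Rv_le_half _ _
  set z := 1/2 - ((SW:ℝ) + α*(Q0:ℝ) + (1-α)*(Q1:ℝ))/((k:ℝ)*2^k) with hzdef
  set w := 1/2 - (1/2 - α)*(((Q0:ℝ) - (Q1:ℝ))/2^k) with hwdef
  clear_value M0 M1 SW Q0 Q1 r0 r1 α z w
  -- combo and z
  have hcombo_eq : α * r0 + (1-α) * r1
      = 1/2 - (α*((Sd k (fiber A false):ℝ)) + (1-α)*((Sd k (fiber A true):ℝ)))/((k:ℝ)*2^k) := by
    rw [hr0def, hr1def]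
    unfold Rv
    field_simp
    ring
  have hcombo0 : 0 ≤ α * r0 + (1-α) * r1 :=
    add_nonneg (mul_nonneg hα0 hr00) (mul_nonneg h1α0 hr10)
  have hcz : α * r0 + (1-α) * r1 ≤ z := by
    rw [hcombo_eq, hzdef]
    have c0 : (SW:ℝ) + (Q0:ℝ) ≤ (Sd k (fiber A false):ℝ) := by exact_mod_cast hS0_nat
    have c1 : (SW:ℝ) + (Q1:ℝ) ≤ (Sd k (fiber A true):ℝ) := by exact_mod_cast hS1_nat
    have hnum : (SW:ℝ) + α*(Q0:ℝ) + (1-α)*(Q1:ℝ)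
        ≤ α*((Sd k (fiber A false):ℝ)) + (1-α)*((Sd k (fiber A true):ℝ)) := by
      nlinarith [mul_le_mul_of_nonneg_left c0 hα0, mul_le_mul_of_nonneg_left c1 h1α0]
    have hD : (0:ℝ) < (k:ℝ)*2^k := by positivity
    gcongr
  have hz_half : z ≤ 1/2 := by
    rw [hzdef]
    have : (0:ℝ) ≤ ((SW:ℝ) + α*(Q0:ℝ) + (1-α)*(Q1:ℝ))/((k:ℝ)*2^k) := by
      apply div_nonneg _ (by positivity)
      have h1 : (0:ℝ) ≤ (SW:ℝ) := Nat.cast_nonneg _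
      have h2 := mul_nonneg hα0 (Nat.cast_nonneg Q0 : (0:ℝ) ≤ (Q0:ℝ))
      have h3 := mul_nonneg h1α0 (Nat.cast_nonneg Q1 : (0:ℝ) ≤ (Q1:ℝ))
      linarith
    linarith
  have hz0 : 0 ≤ z := le_trans hcombo0 hcz
  have hz1 : z ≤ 1 := le_trans hz_half (by norm_num)
  -- w bounds
  have hQ0R : (0:ℝ) ≤ (Q0:ℝ) := Nat.cast_nonneg _
  have hQ1R : (0:ℝ) ≤ (Q1:ℝ) := Nat.cast_nonneg _
  have hQsumR : (Q0:ℝ) + (Q1:ℝ) ≤ 2^k := by exact_mod_cast hQsum_nat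
  have habsQ : |((Q0:ℝ) - (Q1:ℝ))/2^k| ≤ 1 := by
    rw [abs_div, abs_of_pos h2k, div_le_one h2k, abs_le]
    constructor <;> linarith
  have habs : |w - 1/2| ≤ |α - 1/2| := by
    have hw_eq : w - 1/2 = -((1/2 - α) * (((Q0:ℝ) - (Q1:ℝ))/2^k)) := by
      rw [hwdef]; ring
    rw [hw_eq, abs_neg, abs_mul]
    calc |1/2 - α| * |((Q0:ℝ) - (Q1:ℝ))/2^k| ≤ |1/2 - α| * 1 :=
          mul_le_mul_of_nonneg_left habsQ (abs_nonneg _)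
      _ = |α - 1/2| := by rw [mul_one, abs_sub_comm]
  have hαhalf : |α - 1/2| ≤ 1/2 := by
    rw [abs_le]; constructor <;> linarith
  have hwhalf : |w - 1/2| ≤ 1/2 := le_trans habs hαhalf
  have hw0 : 0 ≤ w := by
    rw [abs_le] at hwhalf; linarith [hwhalf.1]
  have hw1 : w ≤ 1 := by
    rw [abs_le] at hwhalf; linarith [hwhalf.2]
  -- final Jensen
  have hconc2 := binEnt_concave (p := z) (q := w) (a := (k:ℝ)/((k:ℝ)+1)) (b := 1/((k:ℝ)+1))
    hz0 hz1 hw0 hw1 (by positivity) (by positivity) (by field_simp)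
  -- Sd cast identity
  have hSdR : (Sd (k+1) A : ℝ) = 2*(SW:ℝ) + ((Q0:ℝ) + (Q1:ℝ)) := by exact_mod_cast hSd_nat
  have hfinal_arg : ((k:ℝ)/((k:ℝ)+1))*z + (1/((k:ℝ)+1))*w = Rv (k+1) A := by
    rw [hzdef, hwdef]
    unfold Rv
    rw [hSdR]
    push_cast
    field_simp
    ring
  -- concavity of binEnt at combo
  have hconc1 := binEnt_concave (p := r0) (q := r1) (a := α) (b := 1-α)
    hr00 (by linarith) hr10 (by linarith) hα0 h1α0 (by ring)
  -- assemble
  have hcardR : ((Nat.card A : ℕ) : ℝ) = (M0:ℝ) + (M1:ℝ) := by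
    rw [hM0def, hM1def]
    exact_mod_cast card_split A
  calc Real.logb 2 (Nat.card A)
      = Real.logb 2 ((M0:ℝ) + (M1:ℝ)) := by rw [hcardR]
    _ = α * Real.logb 2 M0 + (1-α) * Real.logb 2 M1 + binEnt α := by
        rw [hone_sub, hαdef]; exact gibbs hM0 hM1
    _ ≤ α * ((k:ℝ) * binEnt r0) + (1-α) * ((k:ℝ) * binEnt r1) + binEnt α := by
        have g0 := mul_le_mul_of_nonneg_left hIH0 hα0
        have g1 := mul_le_mul_of_nonneg_left hIH1 h1α0
        exact add_le_add (add_le_add g0 g1) le_rfl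
    _ = (k:ℝ) * (α * binEnt r0 + (1-α) * binEnt r1) + binEnt α := by ring
    _ ≤ (k:ℝ) * binEnt (α * r0 + (1-α) * r1) + binEnt α :=
        add_le_add (mul_le_mul_of_nonneg_left hconc1 (le_of_lt hk0)) le_rfl
    _ ≤ (k:ℝ) * binEnt z + binEnt w :=
        add_le_add (mul_le_mul_of_nonneg_left
          (binEnt_mono hcombo0 hcz hz_half) (le_of_lt hk0))
          (binEnt_ge_of_closer hw0 hw1 hα0 hα1 habs)
    _ = ((k:ℝ)+1) * (((k:ℝ)/((k:ℝ)+1)) * binEnt z + (1/((k:ℝ)+1)) * binEnt w) := by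
        field_simp
        try ring
    _ ≤ ((k:ℝ)+1) * binEnt (((k:ℝ)/((k:ℝ)+1))*z + (1/((k:ℝ)+1))*w) :=
        mul_le_mul_of_nonneg_left hconc2 (le_of_lt hn0)
    _ = ((k+1 : ℕ) : ℝ) * binEnt (Rv (k+1) A) := by rw [hfinal_arg]; push_cast; ring


theorem upper_claim : ∀ (n : ℕ) (A : Set (Fin n → Bool)), A.Nonempty →
    Real.logb 2 (Nat.card A) ≤ (n : ℝ) * binEnt (Rv n A) := by
  intro n
  induction n with
  | zero =>
    intro A hA
    exact upper_triv hA (card_one_of_dim0 hA)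
  | succ k IH =>
    intro A hA
    by_cases hF0 : (fiber A false).Nonempty
    · by_cases hF1 : (fiber A true).Nonempty
      · rcases Nat.eq_zero_or_pos k with hk | hk
        · subst hk
          have hall : ∀ x : Fin 1 → Bool, x ∈ A := by
            intro x
            have hat : (Fin.cons (x 0) (Fin.tail x) : Fin 1 → Bool) = x := Fin.cons_self_tail x
            cases h : x 0 with
            | false =>
              obtain ⟨y, hy⟩ := hF0
              have hyx : Fin.tail x = y := funext fun i => i.elim0
              rw [← hat, h, hyx]; exact hy
            | true =>
              obtain ⟨y, hy⟩ := hF1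
              have hyx : Fin.tail x = y := funext fun i => i.elim0
              rw [← hat, h, hyx]; exact hy
          have hSd0 : Sd 1 A = 0 := Finset.sum_eq_zero fun x _ => distToSet_self (hall x)
          have hcard2 : Nat.card A = 2 := by
            have huniv : A = Set.univ := Set.eq_univ_of_forall hall
            rw [huniv, Nat.card_coe_set_eq, Set.ncard_univ, Nat.card_eq_fintype_card,
              Fintype.card_fun]
            simp
          rw [hcard2]
          have hRv : Rv 1 A = 1/2 := by
            unfold Rv
            rw [hSd0]
            norm_num
          rw [hRv, binEnt_half]
          norm_num
        · exact upper_both hk hF0 hF1 (IH _ hF0) (IH _ hF1)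
      · have hF1e : fiber A true = ∅ := Set.not_nonempty_iff_eq_empty.mp hF1
        apply upper_one_empty hF0 hA ?_ (sum_d_split_empty_true hF0 hF1e) (IH _ hF0)
        rw [card_split, hF1e]
        simp [Nat.card_coe_set_eq]
    · have hF0e : fiber A false = ∅ := Set.not_nonempty_iff_eq_empty.mp hF0
      have hF1 : (fiber A true).Nonempty := by
        obtain ⟨a, ha⟩ := hA
        have hat : (Fin.cons (a 0) (Fin.tail a) : Fin (k+1) → Bool) = a := Fin.cons_self_tail a
        have hmem : Fin.tail a ∈ fiber A (a 0) := by rw [mem_fiber, hat]; exact ha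
        cases h : a 0 with
        | false =>
          exfalso
          rw [h] at hmem
          rw [Set.eq_empty_iff_forall_notMem] at hF0e
          exact hF0e _ hmem
        | true =>
          rw [h] at hmem
          exact ⟨_, hmem⟩
      apply upper_one_empty hF1 hA ?_ (sum_d_split_empty_false hF1 hF0e) (IH _ hF1)
      rw [card_split, hF0e]
      simp [Nat.card_coe_set_eq]

theorem sum_pow_hamming {n : ℕ} (s : ℝ) (a : Fin n → Bool) :
    ∑ x : Fin n → Bool, s ^ (hammingDist x a) = (1+s)^n := by
  induction n with
  | zero =>
    have h1 : ∀ x : Fin 0 → Bool, hammingDist x a = 0 := fun x =>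
      hammingDist_eq_zero.mpr (funext fun i => i.elim0)
    simp only [h1, pow_zero]
    rw [Finset.sum_const, Finset.card_univ, Fintype.card_fun]
    simp
  | succ k IHp =>
    rw [sum_split (fun x => s ^ hammingDist x a)]
    have ha : a = (Fin.cons (a 0) (Fin.tail a) : Fin (k+1) → Bool) := (Fin.cons_self_tail a).symm
    have e : ∀ (b : Bool) (y : Fin k → Bool), (s ^ hammingDist (Fin.cons b y : Fin (k+1) → Bool) a)
        = s ^ (if b = a 0 then 0 else 1) * s ^ (hammingDist y (Fin.tail a)) := by
      intro b y
      conv_lhs => rw [ha]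
      rw [hammingDist_cons, pow_add]
    simp only [e]
    rw [← Finset.mul_sum, ← Finset.mul_sum, IHp, ← add_mul]
    have : s ^ (if false = a 0 then 0 else 1) + s ^ (if true = a 0 then 0 else 1) = 1 + s := by
      cases h : a 0 <;> (simp [h]; try ring)
    rw [this]
    ring

theorem union_bound {n : ℕ} {A : Set (Fin n → Bool)} (hA : A.Nonempty) {s : ℝ} (hs : 0 < s) :
    ∑ x : Fin n → Bool, s ^ (distToSet x A) ≤ (Nat.card A : ℝ) * (1+s)^n := by
  classical
  set T := A.toFinite.toFinset with hT
  have hmemT : ∀ a, a ∈ T ↔ a ∈ A := fun a => Set.Finite.mem_toFinset _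
  have hcardT : (Nat.card A : ℕ) = T.card := by
    rw [Nat.card_coe_set_eq, Set.ncard_eq_toFinset_card _ A.toFinite]
  calc ∑ x : Fin n → Bool, s ^ (distToSet x A)
      ≤ ∑ x : Fin n → Bool, ∑ a ∈ T, s ^ (hammingDist x a) := by
        apply Finset.sum_le_sum
        intro x _
        obtain ⟨b, hb, he⟩ := exists_distToSet hA x
        rw [he]
        exact Finset.single_le_sum (f := fun a => s ^ hammingDist x a)
          (fun a _ => by positivity) ((hmemT b).mpr hb)
    _ = ∑ a ∈ T, ∑ x : Fin n → Bool, s ^ (hammingDist x a) := Finset.sum_comm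
    _ = ∑ a ∈ T, (1+s)^n := by
        apply Finset.sum_congr rfl
        intro a _
        exact sum_pow_hamming s a
    _ = (Nat.card A : ℝ) * (1+s)^n := by
        rw [Finset.sum_const, nsmul_eq_mul, hcardT]

theorem jensen_bound {n : ℕ} (A : Set (Fin n → Bool)) {s : ℝ} (hs : 0 < s) :
    (2^n : ℝ) * s ^ ((Sd n A : ℝ)/2^n) ≤ ∑ x : Fin n → Bool, s ^ (distToSet x A) := by
  set L := Real.log s with hL
  set Δ := (Sd n A : ℝ)/2^n with hΔ
  have h2n : (0:ℝ) < 2^n := by positivity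
  have hcard : (Fintype.card (Fin n → Bool) : ℝ) = 2^n := by
    rw [Fintype.card_fun]; simp
  have key : ∀ x : Fin n → Bool,
      s ^ Δ * (1 + L * ((distToSet x A : ℝ) - Δ)) ≤ s ^ (distToSet x A) := by
    intro x
    have e1 : s ^ (distToSet x A) = Real.exp (L * Δ) * Real.exp (L * ((distToSet x A : ℝ) - Δ)) := by
      rw [← Real.exp_add]
      have : L * Δ + L * ((distToSet x A : ℝ) - Δ) = (distToSet x A : ℝ) * L := by ring
      rw [this, hL, mul_comm, ← Real.rpow_def_of_pos hs, Real.rpow_natCast]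
    have e2 : s ^ Δ = Real.exp (L * Δ) := by
      rw [hL, ← Real.rpow_def_of_pos hs]
    rw [e1, e2]
    apply mul_le_mul_of_nonneg_left _ (Real.exp_nonneg _)
    have := Real.add_one_le_exp (L * ((distToSet x A : ℝ) - Δ))
    linarith
  calc (2^n : ℝ) * s ^ Δ
      = s ^ Δ * ∑ x : Fin n → Bool, (1 + L * ((distToSet x A : ℝ) - Δ)) := by
        have hsum : ∑ x : Fin n → Bool, (1 + L * ((distToSet x A : ℝ) - Δ)) = 2^n := by
          rw [Finset.sum_add_distrib, Finset.sum_const, Finset.card_univ]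
          rw [← Finset.mul_sum, Finset.sum_sub_distrib, Finset.sum_const, Finset.card_univ]
          have hSd : ∑ x : Fin n → Bool, ((distToSet x A : ℕ) : ℝ) = (Sd n A : ℝ) := by
            rw [← Nat.cast_sum]
            rfl
          rw [hSd]
          simp only [nsmul_eq_mul, hcard]
          rw [hΔ]
          field_simp
          ring
        rw [hsum]
        ring
    _ = ∑ x : Fin n → Bool, s ^ Δ * (1 + L * ((distToSet x A : ℝ) - Δ)) := by
        rw [Finset.mul_sum]
    _ ≤ ∑ x : Fin n → Bool, s ^ (distToSet x A) := Finset.sum_le_sum fun x _ => key x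

theorem binEnt_eq2 {x : ℝ} (hx : 0 < x) (hx1 : x < 1) :
    binEnt x = -(x * Real.logb 2 x) - (1-x) * Real.logb 2 (1-x) := by
  unfold binEnt
  rw [one_div, one_div, Real.logb_inv, Real.logb_inv]
  ring

theorem logb_two_pow (n : ℕ) : Real.logb 2 ((2:ℝ)^n) = n := by
  rw [Real.logb_pow]
  simp [Real.logb_self_eq_one]

theorem lower_claim {n : ℕ} (hn : 0 < n) {A : Set (Fin n → Bool)} (hA : A.Nonempty) :
    (n:ℝ) * (1 - binEnt ((Sd n A : ℝ)/((n:ℝ) * 2^n))) ≤ Real.logb 2 (Nat.card A) := by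
  have hn0 : (0:ℝ) < (n:ℝ) := by exact_mod_cast hn
  have h2n : (0:ℝ) < (2:ℝ)^n := by positivity
  have hM : 0 < Nat.card A := by
    haveI := hA.to_subtype
    exact Nat.card_pos
  have hMR : (0:ℝ) < (Nat.card A : ℝ) := by exact_mod_cast hM
  rcases Nat.eq_zero_or_pos (Sd n A) with h0 | hpos
  · -- A = univ
    have hall : ∀ x : Fin n → Bool, x ∈ A := by
      intro x
      apply distToSet_eq_zero hA
      have := (Finset.sum_eq_zero_iff.mp h0) x (Finset.mem_univ x)
      exact this
    have hcard : Nat.card A = 2^n := by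
      have huniv : A = Set.univ := Set.eq_univ_of_forall hall
      rw [huniv, Nat.card_coe_set_eq, Set.ncard_univ, Nat.card_eq_fintype_card,
        Fintype.card_fun]
      simp
    rw [hcard, h0]
    push_cast
    rw [zero_div, binEnt_zero, logb_two_pow]
    linarith
  · set δ := (Sd n A : ℝ)/((n:ℝ)*2^n) with hδdef
    have hSdR : (0:ℝ) < (Sd n A : ℝ) := by exact_mod_cast hpos
    have hδ0 : 0 < δ := by rw [hδdef]; positivity
    have hδh : δ ≤ 1/2 := by
      have := Rv_nonneg hA
      unfold Rv at this
      rw [hδdef]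
      linarith
    have h1δ : 0 < 1 - δ := by linarith
    set s := δ/(1-δ) with hsdef
    have hs0 : 0 < s := by rw [hsdef]; positivity
    have hkey := le_trans (jensen_bound A hs0) (union_bound hA hs0)
    have hrp : (0:ℝ) < s ^ ((Sd n A : ℝ)/2^n) := Real.rpow_pos_of_pos hs0 _
    have hlog := (Real.logb_le_logb one_lt_two (by positivity) (by positivity)).mpr hkey
    have hΔr : (Sd n A : ℝ)/2^n = (n:ℝ) * δ := by
      rw [hδdef]
      field_simp
    have hlhs : Real.logb 2 ((2^n : ℝ) * s ^ ((Sd n A : ℝ)/2^n))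
        = (n:ℝ) + ((n:ℝ)*δ) * Real.logb 2 s := by
      rw [Real.logb_mul (ne_of_gt h2n) (ne_of_gt hrp), logb_two_pow]
      congr 1
      rw [Real.logb, Real.log_rpow hs0, hΔr, Real.logb]
      ring
    have hrhs : Real.logb 2 ((Nat.card A : ℝ) * (1+s)^n)
        = Real.logb 2 (Nat.card A) + (n:ℝ) * Real.logb 2 (1+s) := by
      rw [Real.logb_mul (ne_of_gt hMR) (by positivity), Real.logb_pow]
    rw [hlhs, hrhs] at hlog
    have hlogb_s : Real.logb 2 s = Real.logb 2 δ - Real.logb 2 (1-δ) := by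
      rw [hsdef, Real.logb_div (ne_of_gt hδ0) (ne_of_gt h1δ)]
    have h1s : 1 + s = (1-δ)⁻¹ := by
      rw [hsdef]
      field_simp
      ring
    have hlogb_1s : Real.logb 2 (1+s) = - Real.logb 2 (1-δ) := by
      rw [h1s, Real.logb_inv]
    have hfinal : (n:ℝ) * (1 - binEnt δ)
        = (n:ℝ) + ((n:ℝ)*δ) * Real.logb 2 s - (n:ℝ) * Real.logb 2 (1+s) := by
      rw [binEnt_eq2 hδ0 (by linarith), hlogb_s, hlogb_1s]
      ring
    rw [hfinal]
    linarith

/-- Theorem 3.9: for nonempty `A ⊆ C_n` and `ρ = 1/2 - Δ(A)/n`, one has `0 ≤ ρ ≤ 1/2` and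
`1 - H(1/2 - ρ) ≤ (log₂|A|)/n ≤ H(ρ)`. -/
theorem stmt3 {n : ℕ} (hn : 1 ≤ n) (A : Set (Fin n → Bool)) (hA : A.Nonempty)
    (ρ : ℝ) (hρ : ρ = 1 / 2 - avgDist A / n) :
    0 ≤ ρ ∧ ρ ≤ 1 / 2 ∧
      1 - binEnt (1 / 2 - ρ) ≤ Real.logb 2 (Nat.card A) / n ∧
      Real.logb 2 (Nat.card A) / n ≤ binEnt ρ := by
  
  have hn' : 0 < n := hn
  have hn0 : (0:ℝ) < (n:ℝ) := by exact_mod_cast hn'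
  have havg : avgDist A = (Sd n A : ℝ) / 2^n := by
    unfold avgDist Sd
    rw [Fintype.card_fin, Nat.cast_sum]
    ring
  have hρR : ρ = Rv n A := by
    rw [hρ, havg, div_div]
    unfold Rv
    ring_nf
  have hδeq : 1/2 - ρ = (Sd n A : ℝ)/((n:ℝ)*2^n) := by
    rw [hρR]
    unfold Rv
    push_cast
    ring
  refine ⟨?_, ?_, ?_, ?_⟩
  · rw [hρR]; exact Rv_nonneg hA
  · rw [hρR]; exact Rv_le_half n A
  · rw [hδeq, le_div_iff₀ hn0]
    calc (1 - binEnt ((Sd n A : ℝ)/((n:ℝ)*2^n))) * n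
        = (n:ℝ) * (1 - binEnt ((Sd n A : ℝ)/((n:ℝ)*2^n))) := by ring
      _ ≤ Real.logb 2 (Nat.card A) := lower_claim hn' hA
  · rw [div_le_iff₀ hn0]
    calc Real.logb 2 (Nat.card A) ≤ (n:ℝ) * binEnt (Rv n A) := upper_claim n A hA
      _ = binEnt ρ * n := by rw [hρR]; ring
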